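/- arXiv:1009.5948 — 2 statements merged into one kernel-verified Lean document; each statement's English description precedes it below -/
import Mathlib

section
/- Let x, y : ℝ → ℝ be continuously differentiable and 2π-periodic with ∫₀^{2π} x(θ) dθ = 0 and ∫₀^{2π} y(θ) dθ = 0. Then ∫₀^{2π} |x(θ) y'(θ)|² dθ ≤ π · (∫₀^{2π} |x'(θ)|² dθ) · (∫₀^{2π} |y'(θ)|² dθ). -/
open Real MeasureTheory

/-- Cauchy–Schwarz for interval integrals of continuous functions. -/
lemma sq_intervalIntegral_le_mul (f : ℝ → ℝ) (hf : Continuous f) {a b : ℝ} (hab : a ≤ b) :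
    (∫ t in a..b, f t) ^ 2 ≤ (b - a) * ∫ t in a..b, f t ^ 2 := by
  rcases eq_or_lt_of_le hab with rfl | hab
  · simp
  set L := b - a with hLdef
  have hL0 : 0 < L := by simp [hLdef]; linarith
  set A := ∫ t in a..b, f t ^ 2 with hA
  have hA0 : 0 ≤ A := intervalIntegral.integral_nonneg hab.le (fun t _ => sq_nonneg _)
  have hIabs : |∫ t in a..b, f t| ≤ ∫ t in a..b, |f t| :=
    intervalIntegral.abs_integral_le_integral_abs hab.le
  have hI0 : 0 ≤ ∫ t in a..b, |f t| :=
    intervalIntegral.integral_nonneg hab.le (fun t _ => abs_nonneg _)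
  set I := ∫ t in a..b, |f t| with hIdef
  have key : ∀ c : ℝ, 0 < c → 2 * c * I ≤ c ^ 2 * L + A := by
    intro c hc
    have h1 : IntervalIntegrable (fun t => 2 * c * |f t|) volume a b :=
      (continuous_const.mul hf.abs).intervalIntegrable _ _
    have h2 : IntervalIntegrable (fun t => c ^ 2 + f t ^ 2) volume a b :=
      (continuous_const.add (hf.pow 2)).intervalIntegrable _ _
    have hmono : (∫ t in a..b, 2 * c * |f t|) ≤ ∫ t in a..b, (c ^ 2 + f t ^ 2) := by
      refine intervalIntegral.integral_mono_on hab.le h1 h2 (fun t _ => ?_)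
      nlinarith [sq_nonneg (|f t| - c), sq_abs (f t)]
    have e1 : (∫ t in a..b, 2 * c * |f t|) = 2 * c * I := by
      rw [hIdef, intervalIntegral.integral_const_mul]
    have e2 : (∫ t in a..b, (c ^ 2 + f t ^ 2)) = c ^ 2 * L + A := by
      rw [intervalIntegral.integral_add (f := fun _ => c ^ 2) (g := fun t => f t ^ 2)
        ((continuous_const (y := c ^ 2)).intervalIntegrable _ _)
        ((hf.pow 2).intervalIntegrable _ _), intervalIntegral.integral_const]
      ring_nf
      simp [hLdef, hA]
      ring
    linarith [e1 ▸ e2 ▸ hmono]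
  -- deduce I ^ 2 ≤ L * A
  have hI2 : I ^ 2 ≤ L * A := by
    refine le_of_forall_pos_le_add (fun ε hε => ?_)
    set c := Real.sqrt ((A + ε / L) / L) with hc
    have hfrac : 0 < (A + ε / L) / L := by positivity
    have hcpos : 0 < c := Real.sqrt_pos.mpr hfrac
    have hc2 : c ^ 2 = (A + ε / L) / L := Real.sq_sqrt hfrac.le
    have := key c hcpos
    have hIc : I ≤ c * L := by
      have hc2L : c ^ 2 * L = A + ε / L := by
        rw [hc2]; field_simp
      have hq : 2 * c * I ≤ 2 * c * (c * L) := by nlinarith [div_nonneg hε.le hL0.le]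
      exact le_of_mul_le_mul_left hq (by positivity)
    have hsq : I ^ 2 ≤ (c * L) ^ 2 := by nlinarith
    have hcL2 : (c * L) ^ 2 = (A + ε / L) * L := by
      have h : (c * L) ^ 2 = c ^ 2 * L * L := by ring
      rw [h, hc2, div_mul_cancel₀ _ hL0.ne']
    have heps : (A + ε / L) * L = L * A + ε := by
      rw [add_mul, div_mul_cancel₀ _ hL0.ne']; ring
    calc I ^ 2 ≤ (c * L) ^ 2 := hsq
    _ = (A + ε / L) * L := hcL2
    _ = L * A + ε := heps
  calc (∫ t in a..b, f t) ^ 2 ≤ I ^ 2 := by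
        rw [← sq_abs (∫ t in a..b, f t)]; exact pow_le_pow_left₀ (abs_nonneg _) hIabs 2
  _ ≤ L * A := hI2
  _ = (b - a) * A := by rw [hLdef]


lemma exists_zero_of_mean_zero (x : ℝ → ℝ) (hx : Continuous x)
    (hmean : (∫ θ in (0:ℝ)..(2 * π), x θ) = 0) : ∃ θ₀, x θ₀ = 0 := by
  have h2π : (0:ℝ) < 2 * π := by positivity
  set X := fun u : ℝ => ∫ θ in (0:ℝ)..u, x θ with hX
  have hd : ∀ u : ℝ, HasDerivAt X (x u) u := fun u =>
    intervalIntegral.integral_hasDerivAt_right (hx.intervalIntegrable _ _)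
      (hx.stronglyMeasurable.stronglyMeasurableAtFilter) hx.continuousAt
  have hcont : ContinuousOn X (Set.Icc 0 (2 * π)) := fun u _ =>
    (hd u).continuousAt.continuousWithinAt
  have hXI : X 0 = X (2 * π) := by simp [hX, hmean]
  obtain ⟨c, _, hc⟩ := exists_hasDerivAt_eq_zero h2π hcont hXI (fun u _ => hd u)
  exact ⟨c, hc⟩

lemma sup_sq_le (x : ℝ → ℝ) (hx : ContDiff ℝ 1 x)
    (hper : ∀ θ : ℝ, x (θ + 2 * π) = x θ) {θ₀ : ℝ} (hzero : x θ₀ = 0) (θ : ℝ) :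
    x θ ^ 2 ≤ π * ∫ t in (0:ℝ)..(2 * π), deriv x t ^ 2 := by
  have hπ : 0 < π := Real.pi_pos
  have h2π : (0:ℝ) < 2 * π := by positivity
  have hdx : Continuous (deriv x) := hx.continuous_deriv le_rfl
  have hdiff : Differentiable ℝ x := hx.differentiable one_ne_zero
  have hperP : Function.Periodic x (2 * π) := hper
  have hper' : Function.Periodic (deriv x) (2 * π) := by
    intro t
    have h1 : deriv (fun s => x (s + 2 * π)) t = deriv x (t + 2 * π) :=
      deriv_comp_add_const x (2 * π) t
    have h2 : (fun s => x (s + 2 * π)) = x := funext hper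
    rw [h2] at h1
    exact h1.symm
  have hper2 : Function.Periodic (fun t => deriv x t ^ 2) (2 * π) := fun t => by
    simp only [hper' t]
  -- the total integral over one period starting at θ₀
  have hJ : (∫ t in θ₀..θ₀ + 2 * π, deriv x t ^ 2)
      = ∫ t in (0:ℝ)..(2 * π), deriv x t ^ 2 := by
    have := hper2.intervalIntegral_add_eq θ₀ 0
    simpa using this
  have hJ0 : 0 ≤ ∫ t in (0:ℝ)..(2 * π), deriv x t ^ 2 :=
    intervalIntegral.integral_nonneg h2π.le (fun t _ => sq_nonneg _)
  -- reduce θ to the fundamental domain [θ₀, θ₀ + 2π)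
  set θ' := toIcoMod h2π θ₀ θ with hθ'
  have hmem : θ' ∈ Set.Ico θ₀ (θ₀ + 2 * π) := toIcoMod_mem_Ico h2π θ₀ θ
  have hxθ' : x θ' = x θ := by
    rw [hθ', toIcoMod]
    exact hperP.sub_zsmul_eq _
  rw [← hxθ']
  obtain ⟨h1, h2⟩ := hmem
  have hFTC : ∀ a b : ℝ, (∫ t in a..b, deriv x t) = x b - x a := fun a b =>
    intervalIntegral.integral_deriv_eq_sub (fun t _ => hdiff t) (hdx.intervalIntegrable _ _)
  rcases le_or_gt θ' (θ₀ + π) with hcase | hcase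
  · -- short arc on the left
    have hxeq : x θ' = ∫ t in θ₀..θ', deriv x t := by rw [hFTC, hzero, sub_zero]
    have hCS := sq_intervalIntegral_le_mul (deriv x) hdx h1
    have hmono : (∫ t in θ₀..θ', deriv x t ^ 2) ≤ ∫ t in θ₀..θ₀ + 2 * π, deriv x t ^ 2 :=
      intervalIntegral.integral_mono_interval le_rfl h1 h2.le
        (Filter.Eventually.of_forall fun t => sq_nonneg _)
        ((hdx.pow 2).intervalIntegrable _ _)
    have hlen : θ' - θ₀ ≤ π := by linarith
    have hnn : 0 ≤ ∫ t in θ₀..θ', deriv x t ^ 2 :=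
      intervalIntegral.integral_nonneg h1 (fun t _ => sq_nonneg _)
    calc x θ' ^ 2 = (∫ t in θ₀..θ', deriv x t) ^ 2 := by rw [hxeq]
    _ ≤ (θ' - θ₀) * ∫ t in θ₀..θ', deriv x t ^ 2 := hCS
    _ ≤ π * ∫ t in (0:ℝ)..(2 * π), deriv x t ^ 2 := by
        rw [← hJ]; exact mul_le_mul hlen hmono hnn hπ.le
  · -- short arc on the right
    have hxper : x (θ₀ + 2 * π) = 0 := by rw [hper θ₀]; exact hzero
    have hxeq : x θ' = -∫ t in θ'..θ₀ + 2 * π, deriv x t := by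
      rw [hFTC, hxper]; ring
    have hCS := sq_intervalIntegral_le_mul (deriv x) hdx h2.le
    have hmono : (∫ t in θ'..θ₀ + 2 * π, deriv x t ^ 2)
        ≤ ∫ t in θ₀..θ₀ + 2 * π, deriv x t ^ 2 :=
      intervalIntegral.integral_mono_interval h1 h2.le le_rfl
        (Filter.Eventually.of_forall fun t => sq_nonneg _)
        ((hdx.pow 2).intervalIntegrable _ _)
    have hlen : θ₀ + 2 * π - θ' ≤ π := by linarith
    have hnn : 0 ≤ ∫ t in θ'..θ₀ + 2 * π, deriv x t ^ 2 :=
      intervalIntegral.integral_nonneg h2.le (fun t _ => sq_nonneg _)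
    calc x θ' ^ 2 = (∫ t in θ'..θ₀ + 2 * π, deriv x t) ^ 2 := by rw [hxeq]; ring
    _ ≤ (θ₀ + 2 * π - θ') * ∫ t in θ'..θ₀ + 2 * π, deriv x t ^ 2 := hCS
    _ ≤ π * ∫ t in (0:ℝ)..(2 * π), deriv x t ^ 2 := by
        rw [← hJ]; exact mul_le_mul hlen hmono hnn hπ.le

/-- Proposition 2.1 of the paper: `‖B(x,y)‖² ≤ π ‖x‖_V² ‖y‖_V²`, i.e.
`∫₀^{2π} |x y'|² ≤ π (∫₀^{2π} |x'|²)(∫₀^{2π} |y'|²)` for mean-zero `C¹`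
`2π`-periodic functions. -/
theorem burgers_bilinear_bound
    (x y : ℝ → ℝ) (hx : ContDiff ℝ 1 x) (hy : ContDiff ℝ 1 y)
    (hperx : ∀ θ : ℝ, x (θ + 2 * π) = x θ)
    (hpery : ∀ θ : ℝ, y (θ + 2 * π) = y θ)
    (hmeanx : (∫ θ in (0:ℝ)..(2 * π), x θ) = 0)
    (hmeany : (∫ θ in (0:ℝ)..(2 * π), y θ) = 0) :
    (∫ θ in (0:ℝ)..(2 * π), |x θ * deriv y θ| ^ 2)
      ≤ π * (∫ θ in (0:ℝ)..(2 * π), |deriv x θ| ^ 2)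
          * ∫ θ in (0:ℝ)..(2 * π), |deriv y θ| ^ 2 := by
  have hπ : 0 < π := Real.pi_pos
  have h2π : (0:ℝ) < 2 * π := by positivity
  have hdx : Continuous (deriv x) := hx.continuous_deriv le_rfl
  have hdy : Continuous (deriv y) := hy.continuous_deriv le_rfl
  have hxc : Continuous x := hx.continuous
  simp only [sq_abs, abs_mul, mul_pow]
  obtain ⟨θ₀, hθ₀⟩ := exists_zero_of_mean_zero x hxc hmeanx
  set M := π * ∫ t in (0:ℝ)..(2 * π), deriv x t ^ 2 with hM
  have hbound : ∀ θ : ℝ, x θ ^ 2 ≤ M := sup_sq_le x hx hperx hθ₀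
  have hmono : (∫ θ in (0:ℝ)..(2 * π), x θ ^ 2 * deriv y θ ^ 2)
      ≤ ∫ θ in (0:ℝ)..(2 * π), M * deriv y θ ^ 2 := by
    refine intervalIntegral.integral_mono_on h2π.le
      (((hxc.pow 2).mul (hdy.pow 2)).intervalIntegrable _ _)
      ((continuous_const.mul (hdy.pow 2)).intervalIntegrable _ _) (fun t _ => ?_)
    exact mul_le_mul_of_nonneg_right (hbound t) (sq_nonneg _)
  calc (∫ θ in (0:ℝ)..(2 * π), x θ ^ 2 * deriv y θ ^ 2)
      ≤ ∫ θ in (0:ℝ)..(2 * π), M * deriv y θ ^ 2 := hmono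
  _ = M * ∫ θ in (0:ℝ)..(2 * π), deriv y θ ^ 2 := intervalIntegral.integral_const_mul _ _
  _ = π * (∫ θ in (0:ℝ)..(2 * π), deriv x θ ^ 2) * ∫ θ in (0:ℝ)..(2 * π), deriv y θ ^ 2 := by
      rw [hM, mul_assoc]
end

section
/- Let x, y : ℝ → ℝ be continuously differentiable and 2π-periodic with ∫₀^{2π} x(θ) dθ = 0 and ∫₀^{2π} y(θ) dθ = 0. Then |∫₀^{2π} (x(θ)x'(θ) − y(θ)y'(θ)) · (x(θ) − y(θ)) dθ| ≤ π · (∫₀^{2π} |x(θ) − y(θ)|² dθ)^{1/2} · ((∫₀^{2π} |x'(θ)|² dθ)^{1/2} + (∫₀^{2π} |y'(θ)|² dθ)^{1/2}) · (∫₀^{2π} |x'(θ) − y'(θ)|² dθ)^{1/2}. -/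
open Real MeasureTheory

/-- Cauchy–Schwarz for interval integrals of continuous functions. -/
lemma cs_interval (a b : ℝ) (hab : a ≤ b) (f g : ℝ → ℝ) (hf : Continuous f)
    (hg : Continuous g) :
    (∫ θ in a..b, f θ * g θ) ≤
      Real.sqrt (∫ θ in a..b, f θ ^ 2) * Real.sqrt (∫ θ in a..b, g θ ^ 2) := by
  set A := ∫ θ in a..b, f θ ^ 2 with hA
  set B := ∫ θ in a..b, f θ * g θ with hB
  set C := ∫ θ in a..b, g θ ^ 2 with hC
  have hAnn : 0 ≤ A := intervalIntegral.integral_nonneg hab (fun θ _ => sq_nonneg _)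
  have hCnn : 0 ≤ C := intervalIntegral.integral_nonneg hab (fun θ _ => sq_nonneg _)
  have hif : IntervalIntegrable (fun θ => f θ ^ 2) volume a b :=
    ((hf.pow 2).intervalIntegrable a b)
  have hig : IntervalIntegrable (fun θ => g θ ^ 2) volume a b :=
    ((hg.pow 2).intervalIntegrable a b)
  have hifg : IntervalIntegrable (fun θ => f θ * g θ) volume a b :=
    ((hf.mul hg).intervalIntegrable a b)
  have key : ∀ t : ℝ, 0 ≤ A * (t * t) + (2 * B) * t + C := by
    intro t
    have h1 : ∀ θ, (t * f θ + g θ) ^ 2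
        = (t * t) * f θ ^ 2 + (2 * t) * (f θ * g θ) + g θ ^ 2 := by intro θ; ring
    have h2 : (0:ℝ) ≤ ∫ θ in a..b, (t * f θ + g θ) ^ 2 :=
      intervalIntegral.integral_nonneg hab (fun θ _ => sq_nonneg _)
    have h3 : (∫ θ in a..b, (t * f θ + g θ) ^ 2)
        = (t * t) * A + (2 * t) * B + C := by
      simp_rw [h1]
      rw [intervalIntegral.integral_add (((hif.const_mul _).add (hifg.const_mul _)))
        hig, intervalIntegral.integral_add (hif.const_mul _) (hifg.const_mul _),
        intervalIntegral.integral_const_mul, intervalIntegral.integral_const_mul]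
    rw [h3] at h2
    nlinarith [h2]
  have hd := discrim_le_zero key
  rw [discrim] at hd
  have hB2 : B ^ 2 ≤ A * C := by nlinarith [hd]
  calc B ≤ |B| := le_abs_self B
    _ = Real.sqrt (B ^ 2) := (Real.sqrt_sq_eq_abs B).symm
    _ ≤ Real.sqrt (A * C) := Real.sqrt_le_sqrt hB2
    _ = Real.sqrt A * Real.sqrt C := Real.sqrt_mul hAnn _

lemma cs_interval_abs (a b : ℝ) (hab : a ≤ b) (f g : ℝ → ℝ) (hf : Continuous f)
    (hg : Continuous g) :
    (∫ θ in a..b, |f θ| * |g θ|) ≤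
      Real.sqrt (∫ θ in a..b, f θ ^ 2) * Real.sqrt (∫ θ in a..b, g θ ^ 2) := by
  have := cs_interval a b hab (fun θ => |f θ|) (fun θ => |g θ|) hf.abs hg.abs
  simpa [sq_abs] using this

/-- A continuous mean-zero function on `[0, 2π]` vanishes somewhere. -/
lemma exists_zero_of_mean_zero_s4 (f : ℝ → ℝ) (hf : Continuous f)
    (hmean : (∫ θ in (0:ℝ)..(2 * π), f θ) = 0) :
    ∃ c ∈ Set.Icc (0:ℝ) (2 * π), f c = 0 := by
  by_contra h
  push_neg at h
  have h2pi : (0:ℝ) < 2 * π := by positivity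
  by_cases hpos : ∀ c ∈ Set.Icc (0:ℝ) (2 * π), 0 < f c
  · have hlt : 0 < ∫ θ in (0:ℝ)..(2 * π), f θ :=
      intervalIntegral.intervalIntegral_pos_of_pos_on (hf.intervalIntegrable _ _)
        (fun θ hθ => hpos θ ⟨le_of_lt hθ.1, le_of_lt hθ.2⟩) h2pi
    rw [hmean] at hlt; exact lt_irrefl _ hlt
  · push_neg at hpos
    obtain ⟨c₀, hc₀m, hc₀⟩ := hpos
    have hc₀' : f c₀ < 0 := lt_of_le_of_ne hc₀ (h c₀ hc₀m)
    by_cases hneg : ∀ c ∈ Set.Icc (0:ℝ) (2 * π), f c < 0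
    · have hlt : 0 < ∫ θ in (0:ℝ)..(2 * π), -f θ :=
        intervalIntegral.intervalIntegral_pos_of_pos_on ((hf.neg).intervalIntegrable _ _)
          (fun θ hθ => neg_pos.mpr (hneg θ ⟨le_of_lt hθ.1, le_of_lt hθ.2⟩)) h2pi
      rw [intervalIntegral.integral_neg, hmean] at hlt
      simp at hlt
    · push_neg at hneg
      obtain ⟨c₁, hc₁m, hc₁⟩ := hneg
      have hc₁' : 0 < f c₁ := lt_of_le_of_ne hc₁ (fun e => h c₁ hc₁m e.symm)
      have hsub : Set.uIcc c₀ c₁ ⊆ Set.Icc (0:ℝ) (2 * π) :=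
        Set.uIcc_subset_Icc hc₀m hc₁m
      have hmem : (0:ℝ) ∈ Set.uIcc (f c₀) (f c₁) :=
        Set.mem_uIcc.mpr (Or.inl ⟨le_of_lt hc₀', le_of_lt hc₁'⟩)
      obtain ⟨c, hc, hfc⟩ := intermediate_value_uIcc (hf.continuousOn) hmem
      exact h c (hsub hc) hfc

/-- L¹ bound on subintervals. -/
lemma abs_int_bound (f' : ℝ → ℝ) (hf' : Continuous f') {a b : ℝ}
    (ha : (0:ℝ) ≤ a) (hab : a ≤ b) (hb : b ≤ 2 * π) :
    (∫ s in a..b, |f' s|) ≤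
      Real.sqrt (2 * π) * Real.sqrt (∫ s in (0:ℝ)..(2 * π), f' s ^ 2) := by
  have h1 : (∫ s in a..b, |f' s|) = ∫ s in a..b, |(1:ℝ)| * |f' s| := by simp
  have h2 := cs_interval_abs a b hab (fun _ => (1:ℝ)) f' continuous_const hf'
  have h3 : (∫ s in a..b, ((1:ℝ)) ^ 2) = b - a := by simp
  rw [h1]
  refine le_trans h2 ?_
  rw [h3]
  have h4 : Real.sqrt (b - a) ≤ Real.sqrt (2 * π) :=
    Real.sqrt_le_sqrt (by linarith)
  have h5 : (∫ s in a..b, f' s ^ 2) ≤ ∫ s in (0:ℝ)..(2 * π), f' s ^ 2 := by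
    refine intervalIntegral.integral_mono_interval ha hab hb ?_
      (((hf'.pow 2).intervalIntegrable _ _))
    filter_upwards with s using sq_nonneg _
  exact mul_le_mul h4 (Real.sqrt_le_sqrt h5) (Real.sqrt_nonneg _) (Real.sqrt_nonneg _)

/-- Sup bound: a `C¹` mean-zero function is bounded by `√(2π) ‖f'‖₂`. -/
lemma sup_bound (f f' : ℝ → ℝ) (hdf : ∀ t, HasDerivAt f (f' t) t) (hf' : Continuous f')
    (hmean : (∫ θ in (0:ℝ)..(2 * π), f θ) = 0) :
    ∀ θ ∈ Set.Icc (0:ℝ) (2 * π),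
      |f θ| ≤ Real.sqrt (2 * π) * Real.sqrt (∫ s in (0:ℝ)..(2 * π), f' s ^ 2) := by
  have hf : Continuous f := continuous_iff_continuousAt.mpr fun t => (hdf t).continuousAt
  obtain ⟨c, hcm, hfc⟩ := exists_zero_of_mean_zero_s4 f hf hmean
  intro θ hθ
  have hftc : ∀ p q : ℝ, (∫ s in p..q, f' s) = f q - f p := fun p q =>
    intervalIntegral.integral_eq_sub_of_hasDerivAt (fun t _ => hdf t)
      (hf'.intervalIntegrable _ _)
  rcases le_total c θ with hcθ | hθc
  · have : |f θ| = |∫ s in c..θ, f' s| := by rw [hftc, hfc, sub_zero]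
    rw [this]
    refine le_trans (intervalIntegral.abs_integral_le_integral_abs hcθ) ?_
    refine le_trans ?_ (le_refl _)
    exact abs_int_bound f' hf' hcm.1 hcθ hθ.2
  · have : |f θ| = |∫ s in θ..c, f' s| := by
      rw [hftc, hfc, abs_sub_comm]; simp
    rw [this]
    refine le_trans (intervalIntegral.abs_integral_le_integral_abs hθc) ?_
    exact abs_int_bound f' hf' hθ.1 hθc hcm.2
/-- The estimate `|⟨B(x) − B(y), x − y⟩| ≤ π ‖x−y‖ (‖x‖_V + ‖y‖_V) ‖x−y‖_V`
used in the proof of Proposition 2.2 of the paper. -/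
theorem burgers_nonlinearity_monotonicity_estimate
    (x y : ℝ → ℝ) (hx : ContDiff ℝ 1 x) (hy : ContDiff ℝ 1 y)
    (hperx : ∀ θ : ℝ, x (θ + 2 * π) = x θ)
    (hpery : ∀ θ : ℝ, y (θ + 2 * π) = y θ)
    (hmeanx : (∫ θ in (0:ℝ)..(2 * π), x θ) = 0)
    (hmeany : (∫ θ in (0:ℝ)..(2 * π), y θ) = 0) :
    |∫ θ in (0:ℝ)..(2 * π), (x θ * deriv x θ - y θ * deriv y θ) * (x θ - y θ)|
      ≤ π * Real.sqrt (∫ θ in (0:ℝ)..(2 * π), |x θ - y θ| ^ 2)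
          * (Real.sqrt (∫ θ in (0:ℝ)..(2 * π), |deriv x θ| ^ 2)
              + Real.sqrt (∫ θ in (0:ℝ)..(2 * π), |deriv y θ| ^ 2))
          * Real.sqrt (∫ θ in (0:ℝ)..(2 * π), |deriv x θ - deriv y θ| ^ 2) := by
  simp only [sq_abs]
  have h2pi : (0:ℝ) ≤ 2 * π := by positivity
  -- continuity facts
  have hcx : Continuous x := hx.continuous
  have hcy : Continuous y := hy.continuous
  have hcx' : Continuous (deriv x) := hx.continuous_deriv le_rfl
  have hcy' : Continuous (deriv y) := hy.continuous_deriv le_rfl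
  have hxd : ∀ t, HasDerivAt x (deriv x t) t := fun t =>
    ((hx.differentiable one_ne_zero) t).hasDerivAt
  have hyd : ∀ t, HasDerivAt y (deriv y t) t := fun t =>
    ((hy.differentiable one_ne_zero) t).hasDerivAt
  have hud : ∀ t, HasDerivAt (fun θ => x θ - y θ) (deriv x t - deriv y t) t := fun t =>
    (hxd t).sub (hyd t)
  have hcu : Continuous (fun θ => x θ - y θ) := hcx.sub hcy
  have hcu' : Continuous (fun θ => deriv x θ - deriv y θ) := hcx'.sub hcy'
  have humean : (∫ θ in (0:ℝ)..(2 * π), (x θ - y θ)) = 0 := by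
    rw [intervalIntegral.integral_sub (hcx.intervalIntegrable _ _)
      (hcy.intervalIntegrable _ _), hmeanx, hmeany, sub_zero]
  -- abbreviations
  set Nu := Real.sqrt (∫ θ in (0:ℝ)..(2 * π), (x θ - y θ) ^ 2) with hNu
  set Nx := Real.sqrt (∫ θ in (0:ℝ)..(2 * π), (deriv x θ) ^ 2) with hNx
  set Ny := Real.sqrt (∫ θ in (0:ℝ)..(2 * π), (deriv y θ) ^ 2) with hNy
  set Nd := Real.sqrt (∫ θ in (0:ℝ)..(2 * π), (deriv x θ - deriv y θ) ^ 2) with hNd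
  -- sup bounds
  have hbx := sup_bound x (deriv x) hxd hcx' hmeanx
  have hbu := sup_bound (fun θ => x θ - y θ) (fun θ => deriv x θ - deriv y θ) hud hcu' humean
  -- pointwise decomposition
  have hi : ∀ θ, (x θ * deriv x θ - y θ * deriv y θ) * (x θ - y θ)
      = x θ * ((deriv x θ - deriv y θ) * (x θ - y θ))
        + (x θ - y θ) * (deriv y θ * (x θ - y θ)) := by intro θ; ring
  have hsplit : (∫ θ in (0:ℝ)..(2 * π), (x θ * deriv x θ - y θ * deriv y θ) * (x θ - y θ))
      = (∫ θ in (0:ℝ)..(2 * π), x θ * ((deriv x θ - deriv y θ) * (x θ - y θ)))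
        + ∫ θ in (0:ℝ)..(2 * π), (x θ - y θ) * (deriv y θ * (x θ - y θ)) := by
    rw [← intervalIntegral.integral_add
      (f := fun θ => x θ * ((deriv x θ - deriv y θ) * (x θ - y θ)))
      (g := fun θ => (x θ - y θ) * (deriv y θ * (x θ - y θ)))
      ((hcx.mul (hcu'.mul hcu)).intervalIntegrable _ _)
      ((hcu.mul (hcy'.mul hcu)).intervalIntegrable _ _)]
    exact intervalIntegral.integral_congr (fun θ _ => hi θ)
  rw [hsplit]
  -- bound each term
  have key : ∀ (h g : ℝ → ℝ), Continuous h → Continuous g →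
      (∀ θ ∈ Set.Icc (0:ℝ) (2*π), |h θ| ≤ Real.sqrt (2*π) * Real.sqrt (∫ s in (0:ℝ)..(2*π), g s ^ 2)) →
      ∀ (p q : ℝ → ℝ), Continuous p → Continuous q →
      |∫ θ in (0:ℝ)..(2 * π), h θ * (p θ * q θ)|
        ≤ Real.sqrt (2*π) * Real.sqrt (∫ s in (0:ℝ)..(2*π), g s ^ 2)
            * (Real.sqrt (∫ s in (0:ℝ)..(2*π), p s ^ 2) * Real.sqrt (∫ s in (0:ℝ)..(2*π), q s ^ 2)) := by
    intro h g hch hcg hb p q hcp hcq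
    set M := Real.sqrt (2*π) * Real.sqrt (∫ s in (0:ℝ)..(2*π), g s ^ 2) with hM
    have hMnn : 0 ≤ M := mul_nonneg (Real.sqrt_nonneg _) (Real.sqrt_nonneg _)
    calc |∫ θ in (0:ℝ)..(2 * π), h θ * (p θ * q θ)|
        ≤ ∫ θ in (0:ℝ)..(2 * π), |h θ * (p θ * q θ)| :=
          intervalIntegral.abs_integral_le_integral_abs h2pi
      _ ≤ ∫ θ in (0:ℝ)..(2 * π), M * (|p θ| * |q θ|) := by
          refine intervalIntegral.integral_mono_on h2pi
            (((hch.mul (hcp.mul hcq)).abs).intervalIntegrable _ _)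
            ((continuous_const.mul (hcp.abs.mul hcq.abs)).intervalIntegrable _ _)
            (fun θ hθ => ?_)
          rw [abs_mul, abs_mul]
          exact mul_le_mul_of_nonneg_right (hb θ hθ)
            (mul_nonneg (abs_nonneg _) (abs_nonneg _))
      _ = M * ∫ θ in (0:ℝ)..(2 * π), |p θ| * |q θ| :=
          intervalIntegral.integral_const_mul _ _
      _ ≤ M * (Real.sqrt (∫ s in (0:ℝ)..(2*π), p s ^ 2) * Real.sqrt (∫ s in (0:ℝ)..(2*π), q s ^ 2)) :=
          mul_le_mul_of_nonneg_left (cs_interval_abs _ _ h2pi p q hcp hcq) hMnn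
  have key1 := key x (deriv x) hcx hcx' hbx
    (fun θ => deriv x θ - deriv y θ) (fun θ => x θ - y θ) hcu' hcu
  have key2 := key (fun θ => x θ - y θ) (fun θ => deriv x θ - deriv y θ) hcu hcu' hbu
    (fun θ => deriv y θ) (fun θ => x θ - y θ) hcy' hcu
  -- assemble
  have hs2pi : Real.sqrt (2 * π) ≤ π := by
    have h1 : Real.sqrt (2 * π) ≤ Real.sqrt (π ^ 2) :=
      Real.sqrt_le_sqrt (by nlinarith [Real.pi_gt_three])
    rwa [Real.sqrt_sq Real.pi_pos.le] at h1
  have hNunn : 0 ≤ Nu := Real.sqrt_nonneg _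
  have hNxnn : 0 ≤ Nx := Real.sqrt_nonneg _
  have hNynn : 0 ≤ Ny := Real.sqrt_nonneg _
  have hNdnn : 0 ≤ Nd := Real.sqrt_nonneg _
  calc |(∫ θ in (0:ℝ)..(2 * π), x θ * ((deriv x θ - deriv y θ) * (x θ - y θ)))
        + ∫ θ in (0:ℝ)..(2 * π), (x θ - y θ) * (deriv y θ * (x θ - y θ))|
      ≤ |∫ θ in (0:ℝ)..(2 * π), x θ * ((deriv x θ - deriv y θ) * (x θ - y θ))|
        + |∫ θ in (0:ℝ)..(2 * π), (x θ - y θ) * (deriv y θ * (x θ - y θ))| := abs_add_le _ _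
    _ ≤ Real.sqrt (2*π) * Nx * (Nd * Nu) + Real.sqrt (2*π) * Nd * (Ny * Nu) := by
        exact add_le_add key1 key2
    _ ≤ π * Nx * (Nd * Nu) + π * Nd * (Ny * Nu) := by
        gcongr
    _ = π * Nu * (Nx + Ny) * Nd := by ring
end
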